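/- Suppose H is strictly increasing with positive density h, and let b*(v) maximize (v − b)·H(b) over b (the first-price-auction shading bid), and let T*(v) satisfy H(v)·(v − T*(v)) = ∫_0^v H(z) dz (the tCPA target under zero reserve). Then for every v > 0 with b*(v) > 0, the bidder's utility satisfies (v − T*(v))·H(v) > (v − b*(v))·H(b*(v)); i.e., the tCPA format yields strictly higher utility than the mCPA format in the no-commitment game. -/
import Mathlib


open Set intervalIntegral

theorem stmt4 (H : ℝ → ℝ) (v bstar Tstar : ℝ)
    (hC1 : ContDiff ℝ 1 H) (hmono : StrictMonoOn H (Ici 0)) (hH0 : H 0 = 0)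
    (hpos : ∀ z, 0 ≤ z → 0 < deriv H z)
    (hv : 0 < v) (hb0 : 0 < bstar)
    (hbmax : ∀ b, 0 ≤ b → (v - b) * H b ≤ (v - bstar) * H bstar)
    (hT : H v * (v - Tstar) = ∫ z in (0:ℝ)..v, H z) :
    (v - bstar) * H bstar < (v - Tstar) * H v := by
  have hcont : Continuous H := hC1.continuous
  have hHpos : ∀ x : ℝ, 0 < x → 0 < H x := by
    intro x hx
    have := hmono (self_mem_Ici) (Set.mem_Ici.mpr hx.le) hx
    rwa [hH0] at this
  have hHb : 0 < H bstar := hHpos _ hb0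
  -- show bstar < v
  have hhalf : 0 < (v - v/2) * H (v/2) := by
    have h2 : 0 < H (v/2) := hHpos _ (by linarith)
    nlinarith
  have hmaxpos : 0 < (v - bstar) * H bstar :=
    lt_of_lt_of_le hhalf (hbmax _ (by linarith))
  have hbv : bstar < v := by nlinarith
  have hint : ∀ a b : ℝ, IntervalIntegrable H MeasureTheory.volume a b :=
    fun a b => hcont.intervalIntegrable a b
  have h1 : 0 < ∫ z in (0:ℝ)..bstar, H z := by
    apply intervalIntegral.intervalIntegral_pos_of_pos_on (hint 0 bstar) _ hb0
    intro x hx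
    exact hHpos _ hx.1
  have h2 : (v - bstar) * H bstar < ∫ z in bstar..v, H z := by
    have hdiff : 0 < ∫ z in bstar..v, (H z - H bstar) := by
      apply intervalIntegral.intervalIntegral_pos_of_pos_on
        ((hint bstar v).sub intervalIntegrable_const) _ hbv
      intro x hx
      have := hmono (le_of_lt hb0) (Set.mem_Ici.mpr (le_of_lt (hb0.trans hx.1))) hx.1
      linarith
    have heq : (∫ z in bstar..v, (H z - H bstar))
        = (∫ z in bstar..v, H z) - (v - bstar) * H bstar := by
      rw [intervalIntegral.integral_sub (hint bstar v) intervalIntegrable_const,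
        intervalIntegral.integral_const, smul_eq_mul]
    linarith [heq ▸ hdiff]
  have hsplit : (∫ z in (0:ℝ)..v, H z)
      = (∫ z in (0:ℝ)..bstar, H z) + ∫ z in bstar..v, H z :=
    (intervalIntegral.integral_add_adjacent_intervals (hint 0 bstar) (hint bstar v)).symm
  have : (v - Tstar) * H v = ∫ z in (0:ℝ)..v, H z := by linarith [hT, mul_comm (H v) (v - Tstar)]
  linarith
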